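/- Let n = 4k+1 with k ≥ 2, and let X, Y be disjoint sets with |X| = 2k+1 and |Y| = 2k. Pick a_1, a_2 ∈ X and b_1, b_2 ∈ Y. Let G_1 be the graph on X ∪ Y whose edge set is all pairs {x,y} with x ∈ X, y ∈ Y together with the two edges a_1a_2 and b_1b_2. Then every Hamilton cycle of G_1 avoids the edge b_1b_2; consequently G_1 is not Hamilton-generated, i.e., C_n(G_1) ≠ C(G_1). -/

import Mathlib

open SimpleGraph

variable {V : Type} [Fintype V] [DecidableEq V]

/-- Indicator vector over F₂ of a list of edges. -/
def edgeIndicator (l : List (Sym2 V)) : Sym2 V → ZMod 2 :=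
  fun e => if e ∈ l then 1 else 0

/-- The cycle space of a graph: the F₂-span of edge sets of cycles. -/
def cycleSpace (G : SimpleGraph V) : Submodule (ZMod 2) (Sym2 V → ZMod 2) :=
  Submodule.span (ZMod 2)
    {f | ∃ (u : V) (c : G.Walk u u), c.IsCycle ∧ f = edgeIndicator c.edges}

/-- The subspace of the cycle space generated by cycles of length exactly `k`. -/
def cycleSpaceLen (G : SimpleGraph V) (k : ℕ) : Submodule (ZMod 2) (Sym2 V → ZMod 2) :=
  Submodule.span (ZMod 2)
    {f | ∃ (u : V) (c : G.Walk u u), c.IsCycle ∧ c.length = k ∧ f = edgeIndicator c.edges}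


lemma sum_map_add_nat {α : Type*} (l : List α) (f g : α → ℕ) :
    (l.map fun x => f x + g x).sum = (l.map f).sum + (l.map g).sum := by
  induction l with
  | nil => simp
  | cons a l ih => simp [ih]; omega

lemma sum_map_ite_nat {α : Type*} [DecidableEq α] (l : List α) (a : α) :
    (l.map fun x => if x = a then 1 else 0).sum = l.count a := by
  induction l with
  | nil => simp
  | cons b l ih => by_cases h : b = a <;> simp [List.count_cons, ih, h] <;> omega

lemma walk_sum {G : SimpleGraph V} (f : V → ℕ) :
    ∀ {u v : V} (p : G.Walk u v),
    (p.edges.map (Sym2.lift ⟨fun x y => f x + f y, fun a b => add_comm _ _⟩)).sum + f u + f v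
      = 2 * (p.support.map f).sum := by
  intro u v p
  induction p with
  | nil => simp; ring
  | cons h p ih =>
    simp only [Walk.edges_cons, Walk.support_cons, List.map_cons, List.sum_cons, Sym2.lift_mk]
    omega

lemma sum_of_count_one (l : List V) (hl : ∀ v : V, l.count v = 1) (f : V → ℕ) :
    (l.map f).sum = ∑ v : V, f v := by
  have hnd : l.Nodup := List.nodup_iff_count_le_one.mpr fun v => le_of_eq (hl v)
  have huniv : l.toFinset = Finset.univ := by
    apply Finset.eq_univ_of_forall
    intro v
    rw [List.mem_toFinset, ← List.count_pos_iff, hl v]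
    norm_num
  rw [Finset.sum_list_map_count, huniv]
  apply Finset.sum_congr rfl
  intro v _
  rw [hl v, one_smul]

lemma part1 (k : ℕ) (hk : 2 ≤ k)
    (X Y : Set V) (hdis : Disjoint X Y) (hun : X ∪ Y = Set.univ)
    (hX : X.ncard = 2 * k + 1) (hY : Y.ncard = 2 * k)
    (a1 a2 b1 b2 : V)
    (ha1 : a1 ∈ X) (ha2 : a2 ∈ X) (hb1 : b1 ∈ Y) (hb2 : b2 ∈ Y)
    (hane : a1 ≠ a2) (hbne : b1 ≠ b2)
    (G1 : SimpleGraph V)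
    (hG1 : ∀ x y, G1.Adj x y ↔
      ((x ∈ X ∧ y ∈ Y) ∨ (x ∈ Y ∧ y ∈ X) ∨
        ({x, y} : Set V) = {a1, a2} ∨ ({x, y} : Set V) = {b1, b2}))
    (u : V) (c : G1.Walk u u) (hc : c.IsHamiltonianCycle) :
    s(b1, b2) ∉ c.edges := by
  classical
  intro hmem
  have hXY : ∀ v : V, v ∈ X → v ∉ Y := fun v hv => fun hv' =>
    Set.disjoint_left.mp hdis hv hv'
  set f : V → ℕ := fun v => if v ∈ Y then 1 else 0 with hf
  set wY : Sym2 V → ℕ := Sym2.lift ⟨fun x y => f x + f y, fun a b => add_comm _ _⟩ with hwY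
  -- total vertices
  have hcard : Fintype.card V = 4 * k + 1 := by
    have h1 : (Set.univ : Set V).ncard = Fintype.card V := by
      rw [Set.ncard_univ, Nat.card_eq_fintype_card]
    rw [← h1, ← hun, Set.ncard_union_eq hdis X.toFinite Y.toFinite, hX, hY]
    ring
  -- tail counts
  have hnotnil := hc.isCycle.not_nil
  have htail : ∀ v : V, c.support.tail.count v = 1 := by
    intro v
    rw [← Walk.support_tail_of_not_nil c hnotnil]
    exact hc.isHamiltonian_tail v
  -- sum of f over support
  have hsum : (c.edges.map wY).sum = 2 * (2 * k) := by
    have h1 := walk_sum f c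
    have h2 : c.support = u :: c.support.tail := Walk.support_eq_cons c
    have h3 : (c.support.tail.map f).sum = ∑ v : V, f v := sum_of_count_one _ htail f
    have h4 : ∑ v : V, f v = 2 * k := by
      have h5 : ∑ v : V, f v = ∑ v ∈ Y.toFinset, 1 := by
        rw [hf, Finset.sum_congr rfl (fun v _ => rfl), ← Finset.sum_filter]
        congr 1
        ext v
        simp
      rw [h5, Finset.sum_const, smul_eq_mul, mul_one, ← Set.ncard_eq_toFinset_card', hY]
    rw [← hwY] at h1
    rw [h2] at h1
    simp only [List.map_cons, List.sum_cons] at h1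
    omega
  -- pointwise classification
  have hpoint : ∀ e ∈ c.edges, wY e + (if e = s(a1, a2) then 1 else 0)
      = 1 + (if e = s(b1, b2) then 1 else 0) := by
    intro e he
    have hee : e ∈ G1.edgeSet := Walk.edges_subset_edgeSet c he
    induction e using Sym2.ind with
    | _ x y =>
      rw [mem_edgeSet, hG1] at hee
      rcases hee with ⟨hx, hy⟩ | ⟨hx, hy⟩ | h | h
      · have h1 : s(x, y) ≠ s(a1, a2) := by
          intro heq
          rcases Sym2.eq_iff.mp heq with ⟨h1', h2'⟩ | ⟨h1', h2'⟩
          · exact hXY a2 ha2 (h2' ▸ hy)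
          · exact hXY a1 ha1 (h2' ▸ hy)
        have h2 : s(x, y) ≠ s(b1, b2) := by
          intro heq
          rcases Sym2.eq_iff.mp heq with ⟨h1', h2'⟩ | ⟨h1', h2'⟩
          · exact hXY x hx (by rw [h1']; exact hb1)
          · exact hXY x hx (by rw [h1']; exact hb2)
        simp [hwY, hf, h1, h2, hXY x hx, hy]
      · have h1 : s(x, y) ≠ s(a1, a2) := by
          intro heq
          rcases Sym2.eq_iff.mp heq with ⟨h1', h2'⟩ | ⟨h1', h2'⟩
          · exact hXY a1 ha1 (by rw [← h1']; exact hx)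
          · exact hXY a2 ha2 (by rw [← h1']; exact hx)
        have h2 : s(x, y) ≠ s(b1, b2) := by
          intro heq
          rcases Sym2.eq_iff.mp heq with ⟨h1', h2'⟩ | ⟨h1', h2'⟩
          · exact hXY y hy (by rw [h2']; exact hb2)
          · exact hXY y hy (by rw [h2']; exact hb1)
        simp [hwY, hf, h1, h2, hx, hXY y hy]
      · have hxy : (x = a1 ∧ y = a2) ∨ (x = a2 ∧ y = a1) := Set.pair_eq_pair_iff.mp h
        have hxX : x ∈ X := by
          rcases hxy with ⟨h1', _⟩ | ⟨h1', _⟩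
          · rw [h1']; exact ha1
          · rw [h1']; exact ha2
        have hyX : y ∈ X := by
          rcases hxy with ⟨_, h2'⟩ | ⟨_, h2'⟩
          · rw [h2']; exact ha2
          · rw [h2']; exact ha1
        have heq : s(x, y) = s(a1, a2) := Sym2.eq_iff.mpr hxy
        have h2 : s(x, y) ≠ s(b1, b2) := by
          intro heq2
          rcases Sym2.eq_iff.mp heq2 with ⟨g1, _⟩ | ⟨g1, _⟩
          · exact hXY x hxX (by rw [g1]; exact hb1)
          · exact hXY x hxX (by rw [g1]; exact hb2)
        rw [heq] at h2 ⊢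
        simp [hwY, hf, h2, hXY a1 ha1, hXY a2 ha2]
      · have hxy : (x = b1 ∧ y = b2) ∨ (x = b2 ∧ y = b1) := Set.pair_eq_pair_iff.mp h
        have hxY : x ∈ Y := by
          rcases hxy with ⟨h1', _⟩ | ⟨h1', _⟩
          · rw [h1']; exact hb1
          · rw [h1']; exact hb2
        have hyY : y ∈ Y := by
          rcases hxy with ⟨_, h2'⟩ | ⟨_, h2'⟩
          · rw [h2']; exact hb2
          · rw [h2']; exact hb1
        have heq : s(x, y) = s(b1, b2) := Sym2.eq_iff.mpr hxy
        have h1 : s(x, y) ≠ s(a1, a2) := by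
          intro heq2
          rcases Sym2.eq_iff.mp heq2 with ⟨g1, _⟩ | ⟨g1, _⟩
          · exact hXY a1 ha1 (by rw [← g1]; exact hxY)
          · exact hXY a2 ha2 (by rw [← g1]; exact hxY)
        rw [heq] at h1 ⊢
        simp [hwY, hf, h1, hb1, hb2]
  -- sum the identity
  have hmapeq : c.edges.map (fun e => wY e + (if e = s(a1, a2) then 1 else 0))
      = c.edges.map (fun e => 1 + (if e = s(b1, b2) then 1 else 0)) :=
    List.map_congr_left hpoint
  have hsums := congrArg List.sum hmapeq
  rw [sum_map_add_nat, sum_map_add_nat, sum_map_ite_nat, sum_map_ite_nat] at hsums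
  have hnd : c.edges.Nodup := hc.isCycle.edges_nodup
  have hcb : c.edges.count s(b1, b2) = 1 := List.count_eq_one_of_mem hnd hmem
  have hca : c.edges.count s(a1, a2) ≤ 1 := List.nodup_iff_count_le_one.mp hnd _
  have hlen : c.edges.length = 4 * k + 1 := by
    rw [c.length_edges, hc.length_eq, hcard]
  have hones : (c.edges.map fun _ => (1:ℕ)).sum = c.edges.length := by
    simp [List.map_const]
  rw [hsum, hones, hlen, hcb] at hsums
  omega


lemma isHamCycle_of_length {G : SimpleGraph V} {u : V} {c : G.Walk u u}
    (hc : c.IsCycle) (hl : c.length = Fintype.card V) : c.IsHamiltonianCycle := by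
  rw [Walk.isHamiltonianCycle_isCycle_and_isHamiltonian_tail]
  refine ⟨hc, ?_⟩
  intro v
  have hnodup : c.support.tail.Nodup := hc.support_nodup
  have hst : c.tail.support = c.support.tail := Walk.support_tail_of_not_nil c hc.not_nil
  have hlen : c.support.tail.length = Fintype.card V := by
    have h1 : c.support.length = c.length + 1 := Walk.length_support c
    rw [List.length_tail, h1, hl]
    simp
  have huniv : c.support.tail.toFinset = Finset.univ := by
    apply Finset.eq_univ_of_card
    rw [List.toFinset_card_of_nodup hnodup, hlen]
  have hmem : v ∈ c.support.tail := by
    rw [← List.mem_toFinset, huniv]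
    exact Finset.mem_univ v
  rw [hst]
  exact List.count_eq_one_of_mem hnodup hmem

/-- Construction A, graph `G₁`: the complete bipartite graph between `X` and `Y`
together with the two edges `a₁a₂` and `b₁b₂`.  Every Hamilton cycle avoids `b₁b₂`,
and `G₁` is not Hamilton-generated. -/
theorem stmt2 (k : ℕ) (hk : 2 ≤ k)
    (X Y : Set V) (hdis : Disjoint X Y) (hun : X ∪ Y = Set.univ)
    (hX : X.ncard = 2 * k + 1) (hY : Y.ncard = 2 * k)
    (a1 a2 b1 b2 : V)
    (ha1 : a1 ∈ X) (ha2 : a2 ∈ X) (hb1 : b1 ∈ Y) (hb2 : b2 ∈ Y)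
    (hane : a1 ≠ a2) (hbne : b1 ≠ b2)
    (G1 : SimpleGraph V)
    (hG1 : ∀ x y, G1.Adj x y ↔
      ((x ∈ X ∧ y ∈ Y) ∨ (x ∈ Y ∧ y ∈ X) ∨
        ({x, y} : Set V) = {a1, a2} ∨ ({x, y} : Set V) = {b1, b2})) :
    (∀ (u : V) (c : G1.Walk u u), c.IsHamiltonianCycle → s(b1, b2) ∉ c.edges) ∧
      cycleSpaceLen G1 (Fintype.card V) ≠ cycleSpace G1 := by
  classical
  have hXY : ∀ v : V, v ∈ X → v ∉ Y := fun v hv hv' => Set.disjoint_left.mp hdis hv hv'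
  have hpart1 : ∀ (u : V) (c : G1.Walk u u), c.IsHamiltonianCycle → s(b1, b2) ∉ c.edges :=
    fun u c hc => part1 k hk X Y hdis hun hX hY a1 a2 b1 b2 ha1 ha2 hb1 hb2 hane hbne G1 hG1 u c hc
  refine ⟨hpart1, ?_⟩
  -- pick x ∈ X
  obtain ⟨x, hx⟩ : X.Nonempty := ⟨a1, ha1⟩
  have hxb1 : x ≠ b1 := fun h => hXY x hx (h ▸ hb1)
  have hxb2 : x ≠ b2 := fun h => hXY x hx (h ▸ hb2)
  have h1 : G1.Adj b1 x := (hG1 b1 x).mpr (Or.inr (Or.inl ⟨hb1, hx⟩))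
  have h2 : G1.Adj x b2 := (hG1 x b2).mpr (Or.inl ⟨hx, hb2⟩)
  have h3 : G1.Adj b2 b1 := (hG1 b2 b1).mpr (Or.inr (Or.inr (Or.inr (Set.pair_comm b2 b1))))
  set t : G1.Walk b1 b1 := Walk.cons h1 (Walk.cons h2 (Walk.cons h3 Walk.nil)) with ht
  have hcyc : t.IsCycle := by
    rw [ht]
    constructor
    · constructor
      · constructor
        simp [Walk.edges_cons, List.nodup_cons, Sym2.eq_iff, hxb1, hxb2, hbne,
          hbne.symm, hxb1.symm, hxb2.symm]
      · simp
    · simp [Walk.support_cons, List.nodup_cons, hxb1, hxb2, hbne, hbne.symm]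
  have hfmem : edgeIndicator t.edges ∈ cycleSpace G1 :=
    Submodule.subset_span ⟨b1, t, hcyc, rfl⟩
  intro heq
  have hfmem' : edgeIndicator t.edges ∈ cycleSpaceLen G1 (Fintype.card V) := by
    rw [heq]; exact hfmem
  have hker : cycleSpaceLen G1 (Fintype.card V) ≤
      LinearMap.ker (LinearMap.proj (R := ZMod 2) (φ := fun _ : Sym2 V => ZMod 2) s(b1, b2)) := by
    rw [cycleSpaceLen, Submodule.span_le]
    rintro f ⟨u, c, hc, hlen, rfl⟩
    have hham := isHamCycle_of_length hc hlen
    have := hpart1 u c hham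
    simp [LinearMap.mem_ker, edgeIndicator, this]
  have := hker hfmem'
  simp only [LinearMap.mem_ker, LinearMap.proj_apply] at this
  have hone : edgeIndicator t.edges s(b1, b2) = 1 := by
    rw [edgeIndicator, if_pos]
    rw [ht]
    simp [Sym2.eq_swap]
  rw [hone] at this
  exact one_ne_zero this
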